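/- Let a ∈ ℝⁿ \ {0}, b ∈ ℝ, and R, N ∈ ℕ. Let a' ∈ ℤⁿ be a precision-N Diophantine approximation of a (i.e., a' = round(l·a/‖a‖_∞) for some integer 1 ≤ l ≤ Nⁿ with ‖l·a/‖a‖_∞ − a'‖_∞ < 1/N and ‖a'‖_∞ = l), and set α = ‖a‖_∞/‖a'‖_∞. Then for every b' ∈ ℝ: every x with ‖x‖₁ ≤ R and a'·x ≤ b' satisfies a·x ≤ α(b' + R/N); symmetrically, every x with ‖x‖₁ ≤ R and a'·x ≥ b' satisfies a·x ≥ α(b' − R/N). -/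

import Mathlib

/-- Lemma 3.1 part (i): if `a'` is a precision-`N` Diophantine approximation of
`a` and `α = ‖a‖_∞/‖a'‖_∞`, then for every `b'`, on the ball `‖x‖₁ ≤ R`,
`a'·x ≤ b'` implies `a·x ≤ α(b' + R/N)` and `a'·x ≥ b'` implies
`a·x ≥ α(b' − R/N)`. -/
theorem stmt10 (n R N : ℕ) (a : Fin n → ℝ) (ha : a ≠ 0)
    (a' : Fin n → ℤ) (l : ℕ) (hl1 : 1 ≤ l) (hl2 : l ≤ N ^ n)
    (happrox : (⨆ j, |(l : ℝ) * (a j / (⨆ k, |a k|)) - (a' j : ℝ)|) < 1 / N)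
    (hnorm : (⨆ j, |(a' j : ℝ)|) = (l : ℝ)) (b' : ℝ) :
    (∀ x : Fin n → ℝ, (∑ i, |x i|) ≤ (R : ℝ) →
      (∑ i, (a' i : ℝ) * x i) ≤ b' →
      (∑ i, a i * x i) ≤
        ((⨆ j, |a j|) / (⨆ j, |(a' j : ℝ)|)) * (b' + (R : ℝ) / N)) ∧
    (∀ x : Fin n → ℝ, (∑ i, |x i|) ≤ (R : ℝ) →
      b' ≤ ∑ i, (a' i : ℝ) * x i →
      ((⨆ j, |a j|) / (⨆ j, |(a' j : ℝ)|)) * (b' - (R : ℝ) / N) ≤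
        ∑ i, a i * x i) := by
  have hn : n ≠ 0 := by
    rintro rfl
    have h0 : (⨆ j : Fin 0, |(a' j : ℝ)|) = 0 := Real.iSup_of_isEmpty _
    rw [h0] at hnorm
    have : l = 0 := by exact_mod_cast hnorm.symm
    omega
  haveI : Nonempty (Fin n) := ⟨⟨0, Nat.pos_of_ne_zero hn⟩⟩
  set M : ℝ := ⨆ k, |a k| with hMdef
  have hM : 0 < M := by
    obtain ⟨j, hj⟩ := Function.ne_iff.mp ha
    exact lt_of_lt_of_le (abs_pos.mpr hj) (le_ciSup (f := fun k => |a k|) (Set.Finite.bddAbove (Set.finite_range _)) j)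
  have hlR : (0:ℝ) < l := by exact_mod_cast hl1
  have hE : ∀ j, |(l : ℝ) * (a j / M) - (a' j : ℝ)| < 1 / N := fun j =>
    lt_of_le_of_lt (le_ciSup (f := fun j => |(l : ℝ) * (a j / M) - (a' j : ℝ)|) (Set.Finite.bddAbove (Set.finite_range _)) j) happrox
  have hN : 0 < N := by
    rcases Nat.eq_zero_or_pos N with h | h
    · exfalso
      have := hE (Classical.arbitrary _)
      rw [h] at this
      simp at this
      exact absurd this (not_lt.mpr (abs_nonneg _))
    · exact h
  have hNR : (0:ℝ) < N := by exact_mod_cast hN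
  set ε : Fin n → ℝ := fun j => (l : ℝ) * (a j / M) - (a' j : ℝ) with hεdef
  have key : ∀ x : Fin n → ℝ,
      (∑ i, a i * x i) = (M / l) * ((∑ i, (a' i : ℝ) * x i) + ∑ i, ε i * x i) := by
    intro x
    rw [← Finset.sum_add_distrib, Finset.mul_sum]
    congr 1
    funext i
    simp only [hεdef]
    field_simp
    ring
  have herr : ∀ x : Fin n → ℝ, (∑ i, |x i|) ≤ (R : ℝ) →
      |∑ i, ε i * x i| ≤ (R : ℝ) / N := by
    intro x hx
    calc |∑ i, ε i * x i| ≤ ∑ i, |ε i * x i| := Finset.abs_sum_le_sum_abs _ _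
      _ ≤ ∑ i, (1 / N) * |x i| := by
          apply Finset.sum_le_sum
          intro i _
          rw [abs_mul]
          exact mul_le_mul_of_nonneg_right (hE i).le (abs_nonneg _)
      _ = (1 / N) * ∑ i, |x i| := by rw [Finset.mul_sum]
      _ ≤ (1 / N) * R := by
          apply mul_le_mul_of_nonneg_left hx (by positivity)
      _ = (R : ℝ) / N := by ring
  have hα : ((⨆ j, |a j|) / (⨆ j, |(a' j : ℝ)|)) = M / l := by rw [hnorm]
  have hαpos : 0 < M / l := div_pos hM hlR
  constructor
  · intro x hx hb
    rw [key x, hα]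
    apply mul_le_mul_of_nonneg_left _ hαpos.le
    have := (abs_le.mp (herr x hx)).2
    linarith
  · intro x hx hb
    rw [key x, hα]
    apply mul_le_mul_of_nonneg_left _ hαpos.le
    have := (abs_le.mp (herr x hx)).1
    linarith
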